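/- Let u = t₁v₁ + … + tₙvₙ + b₋₁e₋₁ + b₂e₂ + b₋₂e₋₂ + … + bₘeₘ + b₋ₘe₋ₘ (the coefficient of e₁ is 0) and a ∈ R. Then the transvection T₋₁(u, a) = T_{e₋₁, u·1̄⁻¹}(−a) is an R-linear map on V and its matrix with respect to the ordered basis (v₁, …, vₙ, e₁, e₋₁, e₂, e₋₂, …, eₘ, e₋ₘ) is M₋₁(u, a); that is, T₋₁(u, a)(w) = M₋₁(u, a)·w for every coordinate column vector w. -/

import Mathlib

open Matrix BigOperators

namespace OddUnitary

/-- A pseudoinvolution on a commutative ring `R`: `sigma` is the additive map `r ↦ r̄`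
satisfying `σ(r₁r₂) = σ(r₂)·σ(1)⁻¹·σ(r₁)` and `σ(σ(r)) = r`; the field `i` is the
inverse `1̄⁻¹` of the unit `1̄ = sigma 1`. -/
structure PseudoInv (R : Type*) [CommRing R] where
  sigma : R →+ R
  i : R
  bar_one_mul_i : sigma 1 * i = 1
  i_mul_bar_one : i * sigma 1 = 1
  bar_mul : ∀ r s : R, sigma (r * s) = sigma s * i * sigma r
  bar_bar : ∀ r : R, sigma (sigma r) = r

variable {R : Type*} [CommRing R]

/-- Entry `(i, j)` of the matrix `ψ̃_{s/2} ⊥ φ`: hyperbolic blocks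
`ψ̃₁ = [[0, 1], [-1̄, 0]]` occupying the first `s` (an even number) indices,
followed by the `n × n` form matrix `φ`. -/
def psiEnt (P : PseudoInv R) {n : ℕ} (φ : Matrix (Fin n) (Fin n) R) (s i j : ℕ) : R :=
  if i < s ∧ j < s then
    (if j = i + 1 ∧ i % 2 = 0 then 1
     else if i = j + 1 ∧ j % 2 = 0 then -(P.sigma 1) else 0)
  else if h : s ≤ i ∧ i < s + n ∧ s ≤ j ∧ j < s + n then
    φ ⟨i - s, by omega⟩ ⟨j - s, by omega⟩
  else 0

/-- Entry `(i, j)` of the matrix `ψ̃′_{s/2} ⊥ (1̄⁻¹)²·φ`, where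
`ψ̃′₁ = [[0, -1̄⁻¹], [1, 0]]`. -/
def psi'Ent (P : PseudoInv R) {n : ℕ} (φ : Matrix (Fin n) (Fin n) R) (s i j : ℕ) : R :=
  if i < s ∧ j < s then
    (if j = i + 1 ∧ i % 2 = 0 then -P.i
     else if i = j + 1 ∧ j % 2 = 0 then 1 else 0)
  else if h : s ≤ i ∧ i < s + n ∧ s ≤ j ∧ j < s + n then
    P.i * P.i * φ ⟨i - s, by omega⟩ ⟨j - s, by omega⟩
  else 0

/-- The form matrix `Ψ = ψ̃ₘ ⊥ φ` of Petrov's odd hyperbolic unitary group. -/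
def PsiM (P : PseudoInv R) {n : ℕ} (φ : Matrix (Fin n) (Fin n) R) (m : ℕ) :
    Matrix (Fin (n + 2*m)) (Fin (n + 2*m)) R :=
  fun i j => psiEnt P φ (2*m) i j

/-- The row vector `c = (1, 0, …, 0) ∈ R^{n+2m-1}`. -/
def crow (R : Type*) [CommRing R] (n m : ℕ) : Fin (n + 2*m - 1) → R :=
  fun j => if (j : ℕ) = 0 then 1 else 0

/-- The row vector `d = (-1̄⁻¹, 0, …, 0) ∈ R^{n+2m-1}`. -/
def drow (P : PseudoInv R) (n m : ℕ) : Fin (n + 2*m - 1) → R :=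
  fun j => if (j : ℕ) = 0 then -P.i else 0

/-- `μ`, the lower-right `(n+2m-1) × (n+2m-1)` block of `Ψ`. -/
def muM (P : PseudoInv R) {n : ℕ} (φ : Matrix (Fin n) (Fin n) R) (m : ℕ) :
    Matrix (Fin (n + 2*m - 1)) (Fin (n + 2*m - 1)) R :=
  fun i j => psiEnt P φ (2*m) ((i : ℕ) + 1) ((j : ℕ) + 1)

/-- `ρ`, the lower-right `(n+2m-1) × (n+2m-1)` block of `Ψ⁻¹`. -/
noncomputable def rhoM (P : PseudoInv R) {n : ℕ} (φ : Matrix (Fin n) (Fin n) R) (m : ℕ) :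
    Matrix (Fin (n + 2*m - 1)) (Fin (n + 2*m - 1)) R :=
  fun i j => (PsiM P φ m)⁻¹ ⟨(i : ℕ) + 1, by omega⟩ ⟨(j : ℕ) + 1, by omega⟩

/-- `α = I_{n+2m-1} + dᵗ·v̄·μ`. -/
def alphaM (P : PseudoInv R) {n : ℕ} (φ : Matrix (Fin n) (Fin n) R) (m : ℕ)
    (v : Fin (n + 2*m - 1) → R) : Matrix (Fin (n + 2*m - 1)) (Fin (n + 2*m - 1)) R :=
  1 + vecMulVec (drow P n m) (fun k => P.sigma (v k)) * muM P φ m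

/-- `β = I_{n+2m-1} - 1̄⁻¹·ρ·v̄ᵗ·c`. -/
noncomputable def betaM (P : PseudoInv R) {n : ℕ} (φ : Matrix (Fin n) (Fin n) R) (m : ℕ)
    (v : Fin (n + 2*m - 1) → R) : Matrix (Fin (n + 2*m - 1)) (Fin (n + 2*m - 1)) R :=
  1 - P.i • vecMulVec (rhoM P φ m *ᵥ fun k => P.sigma (v k)) (crow R n m)

/-- The Vaserstein-type matrix `L(v) = [[1, 0], [vᵗ, α]]` (block form). -/
def Lmat (P : PseudoInv R) {n : ℕ} (φ : Matrix (Fin n) (Fin n) R) (m : ℕ)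
    (v : Fin (n + 2*m - 1) → R) : Matrix (Fin (n + 2*m)) (Fin (n + 2*m)) R :=
  fun i j =>
    if hi : (i : ℕ) = 0 then (if (j : ℕ) = 0 then 1 else 0)
    else if hj : (j : ℕ) = 0 then v ⟨(i : ℕ) - 1, by omega⟩
    else alphaM P φ m v ⟨(i : ℕ) - 1, by omega⟩ ⟨(j : ℕ) - 1, by omega⟩

/-- The Vaserstein-type matrix `L(v)* = [[1, v], [0, β]]` (block form). -/
noncomputable def Lstar (P : PseudoInv R) {n : ℕ} (φ : Matrix (Fin n) (Fin n) R) (m : ℕ)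
    (v : Fin (n + 2*m - 1) → R) : Matrix (Fin (n + 2*m)) (Fin (n + 2*m)) R :=
  fun i j =>
    if hi : (i : ℕ) = 0 then (if hj : (j : ℕ) = 0 then 1 else v ⟨(j : ℕ) - 1, by omega⟩)
    else if hj : (j : ℕ) = 0 then 0
    else betaM P φ m v ⟨(i : ℕ) - 1, by omega⟩ ⟨(j : ℕ) - 1, by omega⟩

/-- `q(a₂, …, a_{n+2m-1}) = 1̄⁻¹·(ā₂, …, ā_{n+2m-1})·(ψ̃_{m-1} ⊥ φ)·(a₂, …, a_{n+2m-1})ᵗ`. -/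
def qform (P : PseudoInv R) {n : ℕ} (φ : Matrix (Fin n) (Fin n) R) (m : ℕ)
    (v : Fin (n + 2*m - 1) → R) : R :=
  P.i * ∑ i : Fin (n + 2*m - 2), ∑ j : Fin (n + 2*m - 2),
    P.sigma (v ⟨(i : ℕ) + 1, by omega⟩) * psiEnt P φ (2*m - 2) i j * v ⟨(j : ℕ) + 1, by omega⟩

/-- Condition (D) on `v = (a₁, …, a_{n+2m-1})`:
`ā₁ - a₁ = 1̄⁻¹·(ā₂, …)·(ψ̃_{m-1} ⊥ φ)·(a₂, …)ᵗ = q(a₂, …, a_{n+2m-1})`. -/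
def condD (P : PseudoInv R) {n : ℕ} (φ : Matrix (Fin n) (Fin n) R) (m : ℕ)
    (hn : 1 ≤ n) (hm : 2 ≤ m) (v : Fin (n + 2*m - 1) → R) : Prop :=
  P.sigma (v ⟨0, by omega⟩) - v ⟨0, by omega⟩ = qform P φ m v

/-- Condition (E) on `v = (a₁, …, a_{n+2m-1})`:
`σ(1̄·a₁) - 1̄·a₁ = (ā₂, …)·(ψ̃′_{m-1} ⊥ (1̄⁻¹)²·φ)ᵗ·(a₂, …)ᵗ`. -/
def condE (P : PseudoInv R) {n : ℕ} (φ : Matrix (Fin n) (Fin n) R) (m : ℕ)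
    (hn : 1 ≤ n) (hm : 2 ≤ m) (v : Fin (n + 2*m - 1) → R) : Prop :=
  P.sigma (P.sigma 1 * v ⟨0, by omega⟩) - P.sigma 1 * v ⟨0, by omega⟩ =
    ∑ i : Fin (n + 2*m - 2), ∑ j : Fin (n + 2*m - 2),
      P.sigma (v ⟨(i : ℕ) + 1, by omega⟩) * psi'Ent P φ (2*m - 2) j i * v ⟨(j : ℕ) + 1, by omega⟩

/-- The form `B(x, y) = (x mapped entrywise by σ)ᵗ·1̄⁻¹·Ψ·y` on column vectors. -/
def Bform (P : PseudoInv R) {n : ℕ} (φ : Matrix (Fin n) (Fin n) R) (m : ℕ)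
    (x y : Fin (n + 2*m) → R) : R :=
  ∑ i, ∑ j, P.sigma (x i) * P.i * PsiM P φ m i j * y j

/-- Entry function of the Gram matrix `G = φ ⊥ ψ̃ₘ` (form matrix `φ` first), in the
ordered basis `(v₁, …, vₙ, e₁, e₋₁, e₂, e₋₂, …, eₘ, e₋ₘ)`. -/
def gEnt (P : PseudoInv R) {n : ℕ} (φ : Matrix (Fin n) (Fin n) R) (i j : ℕ) : R :=
  if h : i < n ∧ j < n then φ ⟨i, by omega⟩ ⟨j, by omega⟩
  else if n ≤ i ∧ n ≤ j then
    (if j = i + 1 ∧ (i - n) % 2 = 0 then 1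
     else if i = j + 1 ∧ (j - n) % 2 = 0 then -(P.sigma 1) else 0)
  else 0

/-- The Gram matrix `G = φ ⊥ ψ̃ₘ`. -/
def GM (P : PseudoInv R) {n : ℕ} (φ : Matrix (Fin n) (Fin n) R) (m : ℕ) :
    Matrix (Fin (n + 2*m)) (Fin (n + 2*m)) R :=
  fun i j => gEnt P φ i j

/-- The sesquilinear form `⟨x, y⟩ = Σ_{i,j} σ(xᵢ)·1̄⁻¹·G_{ij}·yⱼ` on `V = R^{n+2m}`. -/
def formV (P : PseudoInv R) {n : ℕ} (φ : Matrix (Fin n) (Fin n) R) (m : ℕ)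
    (x y : Fin (n + 2*m) → R) : R :=
  ∑ i, ∑ j, P.sigma (x i) * P.i * GM P φ m i j * y j

/-- The Eichler–Siegel–Dickson transvection
`T_{x,y}(r)(w) = w + x·1̄⁻¹·(⟨y, w⟩ + r·⟨x, w⟩) + y·⟨x, w⟩`. -/
def ESD (P : PseudoInv R) {n : ℕ} (φ : Matrix (Fin n) (Fin n) R) (m : ℕ)
    (x y : Fin (n + 2*m) → R) (r : R) (w : Fin (n + 2*m) → R) : Fin (n + 2*m) → R :=
  w + (P.i * (formV P φ m y w + r * formV P φ m x w)) • x + formV P φ m x w • y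

/-- The basis vector `e₁` (position `n` in the ordered basis). -/
def e1vec (R : Type*) [CommRing R] (n m : ℕ) : Fin (n + 2*m) → R :=
  fun l => if (l : ℕ) = n then 1 else 0

/-- The basis vector `e₋₁` (position `n+1` in the ordered basis). -/
def eneg1vec (R : Type*) [CommRing R] (n m : ℕ) : Fin (n + 2*m) → R :=
  fun l => if (l : ℕ) = n + 1 then 1 else 0

/-- The matrix `M₁(u, a)` of the transvection `T₁(u, a)` in the ordered basis
`(v₁, …, vₙ, e₁, e₋₁, e₂, e₋₂, …, eₘ, e₋ₘ)`; here `u` is the coordinate vector of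
`t₁v₁ + … + tₙvₙ + b₁e₁ + b₂e₂ + b₋₂e₋₂ + … + bₘeₘ + b₋ₘe₋ₘ`. -/
def M1 (P : PseudoInv R) {n : ℕ} (φ : Matrix (Fin n) (Fin n) R) (m : ℕ)
    (u : Fin (n + 2*m) → R) (a : R) : Matrix (Fin (n + 2*m)) (Fin (n + 2*m)) R :=
  fun i j =>
    if hj1 : (j : ℕ) = n + 1 then
      -- the `e₋₁` column
      if hi : (i : ℕ) < n then -u i
      else if hi1 : (i : ℕ) = n then
        -(P.sigma (u ⟨n, by omega⟩) * (P.i * P.i) + a * P.i + u ⟨n, by omega⟩)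
      else if hi2 : (i : ℕ) = n + 1 then 1
      else -u i
    else if hi1 : (i : ℕ) = n then
      -- the `e₁` row
      if hj : (j : ℕ) < n then
        -((P.i * P.i) * ∑ l : Fin n, P.sigma (u ⟨(l : ℕ), by omega⟩) * φ l ⟨(j : ℕ), hj⟩)
      else if hj2 : (j : ℕ) = n then 1
      else if hj3 : ((j : ℕ) - n) % 2 = 0 then
        P.i * P.sigma (u ⟨(j : ℕ) + 1, by omega⟩)
      else -(P.i * P.i) * P.sigma (u ⟨(j : ℕ) - 1, by omega⟩)
    else if (i : ℕ) = (j : ℕ) then 1 else 0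

/-- The matrix `M₋₁(u, a)` of the transvection `T₋₁(u, a)` in the ordered basis
`(v₁, …, vₙ, e₁, e₋₁, e₂, e₋₂, …, eₘ, e₋ₘ)`; here `u` is the coordinate vector of
`t₁v₁ + … + tₙvₙ + b₋₁e₋₁ + b₂e₂ + b₋₂e₋₂ + … + bₘeₘ + b₋ₘe₋ₘ`. -/
def Mneg1 (P : PseudoInv R) {n : ℕ} (φ : Matrix (Fin n) (Fin n) R) (m : ℕ)
    (u : Fin (n + 2*m) → R) (a : R) : Matrix (Fin (n + 2*m)) (Fin (n + 2*m)) R :=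
  fun i j =>
    if hj1 : (j : ℕ) = n then
      -- the `e₁` column
      if hi : (i : ℕ) < n then -u i
      else if hi1 : (i : ℕ) = n then 1
      else if hi2 : (i : ℕ) = n + 1 then
        -P.sigma (u ⟨n + 1, by omega⟩) + a - u ⟨n + 1, by omega⟩
      else -u i
    else if hi1 : (i : ℕ) = n + 1 then
      -- the `e₋₁` row
      if hj : (j : ℕ) < n then
        P.i * ∑ l : Fin n, P.sigma (u ⟨(l : ℕ), by omega⟩) * φ l ⟨(j : ℕ), hj⟩
      else if hj2 : (j : ℕ) = n + 1 then 1
      else if hj3 : ((j : ℕ) - n) % 2 = 0 then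
        -P.sigma (u ⟨(j : ℕ) + 1, by omega⟩)
      else P.i * P.sigma (u ⟨(j : ℕ) - 1, by omega⟩)
    else if (i : ℕ) = (j : ℕ) then 1 else 0

/-- The permutation matrix `P = [[0_{2m×n}, I_{2m}], [Iₙ, 0_{n×2m}]]`. -/
def Pperm (R : Type*) [CommRing R] (n m : ℕ) :
    Matrix (Fin (n + 2*m)) (Fin (n + 2*m)) R :=
  fun i j =>
    if (i : ℕ) < 2*m then (if (j : ℕ) = n + i then 1 else 0)
    else (if (j : ℕ) = (i : ℕ) - 2*m then 1 else 0)

/-- The coordinate vector of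
`u₁ = -a_{2m}v₁ - … - a_{n+2m-1}vₙ - a₂e₂ - a₃e₋₂ - … - a_{2m-2}eₘ - a_{2m-1}e₋ₘ`. -/
def u1vec {R : Type*} [CommRing R] {n m : ℕ} (hm : 2 ≤ m)
    (v : Fin (n + 2*m - 1) → R) : Fin (n + 2*m) → R :=
  fun l =>
    if hl : (l : ℕ) < n then -v ⟨2*m - 1 + (l : ℕ), by omega⟩
    else if hl1 : (l : ℕ) = n ∨ (l : ℕ) = n + 1 then 0
    else -v ⟨(l : ℕ) - n - 1, by omega⟩

/-- The coordinate vector of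
`u₂ = Σₖ 1̄⁻¹·(ā_{2m}·(φ⁻¹)_{k1} + … + ā_{n+2m-1}·(φ⁻¹)_{kn})·vₖ
      - (1̄⁻¹)²·ā₃e₂ + 1̄⁻¹·ā₂e₋₂ - … - (1̄⁻¹)²·ā_{2m-1}eₘ + 1̄⁻¹·ā_{2m-2}e₋ₘ`. -/
noncomputable def u2vec (P : PseudoInv R) {n : ℕ} (φ : Matrix (Fin n) (Fin n) R) {m : ℕ} (hm : 2 ≤ m)
    (v : Fin (n + 2*m - 1) → R) : Fin (n + 2*m) → R :=
  fun l =>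
    if hl : (l : ℕ) < n then
      P.i * ∑ j : Fin n, P.sigma (v ⟨2*m - 1 + (j : ℕ), by omega⟩) * φ⁻¹ ⟨(l : ℕ), hl⟩ j
    else if hl1 : (l : ℕ) = n ∨ (l : ℕ) = n + 1 then 0
    else if hl2 : ((l : ℕ) - n) % 2 = 0 then
      -(P.i * P.i) * P.sigma (v ⟨(l : ℕ) - n, by omega⟩)
    else P.i * P.sigma (v ⟨(l : ℕ) - n - 2, by omega⟩)

section Aux

variable {R : Type*} [CommRing R] (P : PseudoInv R) {n : ℕ} (φ : Matrix (Fin n) (Fin n) R)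

lemma i_sigma_i : P.i * P.sigma P.i = P.sigma 1 := by
  have h := P.bar_mul P.i (P.sigma 1)
  rw [P.i_mul_bar_one, P.bar_bar, one_mul] at h
  exact h.symm

lemma key (r : R) : P.sigma (P.i * r) * P.i = P.sigma r := by
  rw [P.bar_mul]
  calc P.sigma r * P.i * P.sigma P.i * P.i
      = P.sigma r * ((P.i * P.sigma P.i) * P.i) := by ring
    _ = P.sigma r * (P.sigma 1 * P.i) := by rw [i_sigma_i]
    _ = P.sigma r := by rw [P.bar_one_mul_i, mul_one]

lemma gEnt_lt {i j : ℕ} (hi : i < n) (hj : j < n) : gEnt P φ i j = φ ⟨i, hi⟩ ⟨j, hj⟩ := by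
  unfold gEnt; rw [dif_pos ⟨hi, hj⟩]

lemma gEnt_left {i j : ℕ} (hj : j < n) (hi : n ≤ i) : gEnt P φ i j = 0 := by
  unfold gEnt; rw [dif_neg (by omega), if_neg (by omega)]

lemma gEnt_right {i j : ℕ} (hi : i < n) (hj : n ≤ j) : gEnt P φ i j = 0 := by
  unfold gEnt; rw [dif_neg (by omega), if_neg (by omega)]

lemma gEnt_hyp {i j : ℕ} (hi : n ≤ i) (hj : n ≤ j) :
    gEnt P φ i j = if j = i + 1 ∧ (i - n) % 2 = 0 then 1
     else if i = j + 1 ∧ (j - n) % 2 = 0 then -(P.sigma 1) else 0 := by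
  unfold gEnt; rw [dif_neg (by omega), if_pos ⟨hi, hj⟩]

variable {m : ℕ}

lemma coef_lt (u : Fin (n + 2*m) → R) {j : Fin (n + 2*m)} (hj : (j : ℕ) < n) :
    ∑ i, P.sigma (u i) * GM P φ m i j
      = ∑ l : Fin n, P.sigma (u ⟨(l : ℕ), by omega⟩) * φ l ⟨(j : ℕ), hj⟩ := by
  rw [Fin.sum_univ_add (f := fun i : Fin (n + 2*m) => P.sigma (u i) * GM P φ m i j)]
  have h2 : ∀ i : Fin (2*m),
      P.sigma (u (Fin.natAdd n i)) * GM P φ m (Fin.natAdd n i) j = 0 := by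
    intro i
    have : GM P φ m (Fin.natAdd n i) j = 0 := gEnt_left P φ hj (by simp)
    rw [this, mul_zero]
  rw [Finset.sum_congr rfl (fun i _ => h2 i), Finset.sum_const_zero, add_zero]
  refine Finset.sum_congr rfl (fun i _ => ?_)
  have : GM P φ m (Fin.castAdd (2*m) i) j = φ i ⟨(j : ℕ), hj⟩ := by
    have := gEnt_lt P φ (i := (i:ℕ)) (j := (j:ℕ)) i.isLt hj
    simpa [GM] using this
  rw [this]
  rfl

lemma coef_n (hm : 1 ≤ m) (u : Fin (n + 2*m) → R) :
    ∑ i, P.sigma (u i) * GM P φ m i ⟨n, by omega⟩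
      = -(P.sigma 1) * P.sigma (u ⟨n + 1, by omega⟩) := by
  rw [Finset.sum_eq_single (⟨n + 1, by omega⟩ : Fin (n + 2*m))]
  · have : GM P φ m ⟨n + 1, by omega⟩ ⟨n, by omega⟩ = -(P.sigma 1) := by
      show gEnt P φ (n+1) n = _
      rw [gEnt_hyp P φ (by omega) le_rfl, if_neg (by omega), if_pos (by omega)]
    rw [this]; ring
  · intro b _ hb
    have hb' : (b : ℕ) ≠ n + 1 := fun h => hb (Fin.ext h)
    have : GM P φ m b ⟨n, by omega⟩ = 0 := by
      show gEnt P φ (b : ℕ) n = 0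
      rcases lt_or_ge (b : ℕ) n with h | h
      · exact gEnt_right P φ h le_rfl
      · rw [gEnt_hyp P φ h le_rfl, if_neg (by omega), if_neg (by omega)]
    rw [this, mul_zero]
  · intro h; exact absurd (Finset.mem_univ _) h

lemma coef_n1 (hm : 1 ≤ m) (u : Fin (n + 2*m) → R) :
    ∑ i, P.sigma (u i) * GM P φ m i ⟨n + 1, by omega⟩
      = P.sigma (u ⟨n, by omega⟩) := by
  rw [Finset.sum_eq_single (⟨n, by omega⟩ : Fin (n + 2*m))]
  · have : GM P φ m ⟨n, by omega⟩ ⟨n + 1, by omega⟩ = 1 := by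
      show gEnt P φ n (n+1) = _
      rw [gEnt_hyp P φ le_rfl (by omega), if_pos (by omega)]
    rw [this, mul_one]
  · intro b _ hb
    have hb' : (b : ℕ) ≠ n := fun h => hb (Fin.ext h)
    have : GM P φ m b ⟨n + 1, by omega⟩ = 0 := by
      show gEnt P φ (b : ℕ) (n+1) = 0
      rcases lt_or_ge (b : ℕ) n with h | h
      · exact gEnt_right P φ h (by omega)
      · rw [gEnt_hyp P φ h (by omega), if_neg (by omega), if_neg (by omega)]
    rw [this, mul_zero]
  · intro h; exact absurd (Finset.mem_univ _) h

lemma coef_even (u : Fin (n + 2*m) → R) {j : Fin (n + 2*m)}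
    (hj : n + 2 ≤ (j : ℕ)) (he : ((j : ℕ) - n) % 2 = 0) :
    ∑ i, P.sigma (u i) * GM P φ m i j
      = -(P.sigma 1) * P.sigma (u ⟨(j : ℕ) + 1, by omega⟩) := by
  have hj1 : (j : ℕ) + 1 < n + 2*m := by omega
  rw [Finset.sum_eq_single (⟨(j : ℕ) + 1, hj1⟩ : Fin (n + 2*m))]
  · have : GM P φ m ⟨(j : ℕ) + 1, hj1⟩ j = -(P.sigma 1) := by
      show gEnt P φ ((j:ℕ)+1) (j:ℕ) = _
      rw [gEnt_hyp P φ (by omega) (by omega), if_neg (by omega), if_pos (by omega)]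
    rw [this]; ring
  · intro b _ hb
    have hb' : (b : ℕ) ≠ (j : ℕ) + 1 := fun h => hb (Fin.ext h)
    have : GM P φ m b j = 0 := by
      show gEnt P φ (b : ℕ) (j : ℕ) = 0
      rcases lt_or_ge (b : ℕ) n with h | h
      · exact gEnt_right P φ h (by omega)
      · rw [gEnt_hyp P φ h (by omega), if_neg (by omega), if_neg (by omega)]
    rw [this, mul_zero]
  · intro h; exact absurd (Finset.mem_univ _) h

lemma coef_odd (u : Fin (n + 2*m) → R) {j : Fin (n + 2*m)}
    (hj : n + 2 ≤ (j : ℕ)) (he : ((j : ℕ) - n) % 2 ≠ 0) :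
    ∑ i, P.sigma (u i) * GM P φ m i j
      = P.sigma (u ⟨(j : ℕ) - 1, by omega⟩) := by
  have hj1 : (j : ℕ) - 1 < n + 2*m := by omega
  rw [Finset.sum_eq_single (⟨(j : ℕ) - 1, hj1⟩ : Fin (n + 2*m))]
  · have : GM P φ m ⟨(j : ℕ) - 1, hj1⟩ j = 1 := by
      show gEnt P φ ((j:ℕ)-1) (j:ℕ) = _
      rw [gEnt_hyp P φ (by omega) (by omega), if_pos (by omega)]
    rw [this, mul_one]
  · intro b _ hb
    have hb' : (b : ℕ) ≠ (j : ℕ) - 1 := fun h => hb (Fin.ext h)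
    have : GM P φ m b j = 0 := by
      show gEnt P φ (b : ℕ) (j : ℕ) = 0
      rcases lt_or_ge (b : ℕ) n with h | h
      · exact gEnt_right P φ h (by omega)
      · rw [gEnt_hyp P φ h (by omega), if_neg (by omega), if_neg (by omega)]
    rw [this, mul_zero]
  · intro h; exact absurd (Finset.mem_univ _) h

lemma formV_eneg1 (m : ℕ) (hm : 1 ≤ m) (w : Fin (n + 2*m) → R) :
    formV P φ m (eneg1vec R n m) w = -(P.sigma 1 * w ⟨n, by omega⟩) := by
  unfold formV
  rw [Finset.sum_eq_single (⟨n + 1, by omega⟩ : Fin (n + 2*m))]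
  · rw [Finset.sum_eq_single (⟨n, by omega⟩ : Fin (n + 2*m))]
    · have hG : GM P φ m ⟨n + 1, by omega⟩ ⟨n, by omega⟩ = -(P.sigma 1) := by
        show gEnt P φ (n+1) n = _
        rw [gEnt_hyp P φ (by omega) le_rfl, if_neg (by omega), if_pos (by omega)]
      have he : eneg1vec R n m ⟨n + 1, by omega⟩ = 1 := by simp [eneg1vec]
      rw [hG, he]
      have := P.bar_one_mul_i
      calc P.sigma 1 * P.i * -(P.sigma 1) * w ⟨n, by omega⟩
          = -((P.sigma 1 * P.i) * (P.sigma 1 * w ⟨n, by omega⟩)) := by ring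
        _ = -(P.sigma 1 * w ⟨n, by omega⟩) := by rw [this, one_mul]
    · intro b _ hb
      have hb' : (b : ℕ) ≠ n := fun h => hb (Fin.ext h)
      have : GM P φ m ⟨n + 1, by omega⟩ b = 0 := by
        show gEnt P φ (n+1) (b : ℕ) = 0
        rcases lt_or_ge (b : ℕ) n with h | h
        · exact gEnt_left P φ h (by omega)
        · rw [gEnt_hyp P φ (by omega) h, if_neg (by omega), if_neg (by omega)]
      rw [this, mul_zero, zero_mul]
    · intro h; exact absurd (Finset.mem_univ _) h
  · intro b _ hb
    have hb' : (b : ℕ) ≠ n + 1 := fun h => hb (Fin.ext h)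
    have : eneg1vec R n m b = 0 := by simp [eneg1vec, hb']
    rw [this]
    simp
  · intro h; exact absurd (Finset.mem_univ _) h

end Aux
/-- for `u = t₁v₁ + … + tₙvₙ + b₋₁e₋₁ + b₂e₂ + b₋₂e₋₂ + … + bₘeₘ + b₋ₘe₋ₘ`
(coefficient of `e₁` equal to `0`) and `a ∈ R`, the transvection
`T₋₁(u, a) = T_{e₋₁, u·1̄⁻¹}(-a)` acts on coordinate column vectors as the matrix
`M₋₁(u, a)`: `T₋₁(u, a)(w) = M₋₁(u, a)·w` for every `w` (in particular it is `R`-linear). -/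
theorem Tneg1_matrix {R : Type*} [CommRing R] (P : PseudoInv R)
    {n m : ℕ} (hn : 1 ≤ n) (hm : 2 ≤ m)
    (φ : Matrix (Fin n) (Fin n) R) (hφ : IsUnit φ.det)
    (hφa : φ = -((φ.map ⇑P.sigma)ᵀ))
    (u : Fin (n + 2*m) → R) (hu : u ⟨n, by omega⟩ = 0) (a : R) :
    ∀ w : Fin (n + 2*m) → R,
      ESD P φ m (eneg1vec R n m) (P.i • u) (-a) w = Mneg1 P φ m u a *ᵥ w := by
  intro w
  funext l
  have hx0 : n < n + 2*m := by omega
  have hx1 : n + 1 < n + 2*m := by omega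
  have hneg : ∀ x : R, P.i * (-(P.sigma 1) * x) = -x := fun x => by
    calc P.i * (-(P.sigma 1) * x) = -((P.i * P.sigma 1) * x) := by ring
      _ = -x := by rw [P.i_mul_bar_one, one_mul]
  have hfx : formV P φ m (eneg1vec R n m) w = -(P.sigma 1 * w ⟨n, by omega⟩) :=
    formV_eneg1 P φ m (by omega) w
  have hfy : formV P φ m (P.i • u) w
      = ∑ j, (∑ i, P.sigma (u i) * GM P φ m i j) * w j := by
    unfold formV
    rw [Finset.sum_comm]
    refine Finset.sum_congr rfl (fun j _ => ?_)
    rw [Finset.sum_mul]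
    refine Finset.sum_congr rfl (fun i _ => ?_)
    have hk : P.sigma (P.i * u i) * P.i = P.sigma (u i) := key P (u i)
    have hsm : (P.i • u) i = P.i * u i := rfl
    calc P.sigma ((P.i • u) i) * P.i * GM P φ m i j * w j
        = (P.sigma (P.i * u i) * P.i) * (GM P φ m i j * w j) := by rw [hsm]; ring
      _ = P.sigma (u i) * GM P φ m i j * w j := by rw [hk]; ring
  have hESD : ESD P φ m (eneg1vec R n m) (P.i • u) (-a) w l
      = w l + (P.i * (formV P φ m (P.i • u) w
            + (-a) * formV P φ m (eneg1vec R n m) w)) * eneg1vec R n m l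
        + formV P φ m (eneg1vec R n m) w * (P.i * u l) := by
    simp only [ESD, Pi.add_apply, Pi.smul_apply, smul_eq_mul]
  rw [hESD, hfx, hfy]
  simp only [Matrix.mulVec, dotProduct]
  by_cases hl1 : (l : ℕ) = n + 1
  · -- row e₋₁
    have hl : l = ⟨n + 1, hx1⟩ := Fin.ext hl1
    subst hl
    have he1 : eneg1vec R n m ⟨n + 1, by omega⟩ = 1 := by simp [eneg1vec]
    rw [he1, mul_one]
    have hpt : ∀ j : Fin (n + 2*m),
        Mneg1 P φ m u a ⟨n + 1, by omega⟩ j * w j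
        = (P.i * ∑ i, P.sigma (u i) * GM P φ m i j) * w j
          + (if j = (⟨n + 1, by omega⟩ : Fin (n + 2*m)) then w j else 0)
          + (if j = (⟨n, by omega⟩ : Fin (n + 2*m)) then
              (a - u ⟨n + 1, by omega⟩) * w j else 0) := by
      intro j
      by_cases hjn : (j : ℕ) = n
      · have hj : j = ⟨n, hx0⟩ := Fin.ext hjn
        subst hj
        rw [coef_n P φ (by omega) u]
        have hM : Mneg1 P φ m u a ⟨n + 1, by omega⟩ ⟨n, by omega⟩
            = -P.sigma (u ⟨n + 1, by omega⟩) + a - u ⟨n + 1, by omega⟩ := by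
          unfold Mneg1
          rw [dif_pos rfl, dif_neg (by omega), dif_neg (by omega), dif_pos rfl]
        rw [hM, hneg, if_neg (by simp only [ne_eq, Fin.mk.injEq]; omega), if_pos rfl]
        ring
      by_cases hjn1 : (j : ℕ) = n + 1
      · have hj : j = ⟨n + 1, hx1⟩ := Fin.ext hjn1
        subst hj
        rw [coef_n1 P φ (by omega) u, hu]
        have hM : Mneg1 P φ m u a ⟨n + 1, by omega⟩ ⟨n + 1, by omega⟩ = 1 := by
          unfold Mneg1
          rw [dif_neg (by omega), dif_pos rfl, dif_neg (by omega), dif_pos rfl]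
        rw [hM, if_pos rfl, if_neg (by simp only [ne_eq, Fin.mk.injEq]; omega)]
        simp only [map_zero, mul_zero, zero_mul, one_mul, add_zero, zero_add]
      have hjne : j ≠ (⟨n, by omega⟩ : Fin (n + 2*m)) := by
        intro h
        have : (j : ℕ) = n := by rw [h]
        omega
      have hjne1 : j ≠ (⟨n + 1, by omega⟩ : Fin (n + 2*m)) := by
        intro h
        have : (j : ℕ) = n + 1 := by rw [h]
        omega
      rw [if_neg hjne1, if_neg hjne, add_zero, add_zero]
      by_cases hjlt : (j : ℕ) < n
      · rw [coef_lt P φ u hjlt]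
        have hM : Mneg1 P φ m u a ⟨n + 1, by omega⟩ j
            = P.i * ∑ l : Fin n, P.sigma (u ⟨(l : ℕ), by omega⟩) * φ l ⟨(j : ℕ), hjlt⟩ := by
          unfold Mneg1
          rw [dif_neg (by omega), dif_pos rfl, dif_pos hjlt]
        rw [hM]
      have hjge : n + 2 ≤ (j : ℕ) := by omega
      by_cases hje : ((j : ℕ) - n) % 2 = 0
      · rw [coef_even P φ u hjge hje]
        have hM : Mneg1 P φ m u a ⟨n + 1, by omega⟩ j
            = -P.sigma (u ⟨(j : ℕ) + 1, by omega⟩) := by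
          unfold Mneg1
          rw [dif_neg (by omega), dif_pos rfl, dif_neg (by omega), dif_neg (by omega),
            dif_pos hje]
        rw [hM, hneg]
      · rw [coef_odd P φ u hjge hje]
        have hM : Mneg1 P φ m u a ⟨n + 1, by omega⟩ j
            = P.i * P.sigma (u ⟨(j : ℕ) - 1, by omega⟩) := by
          unfold Mneg1
          rw [dif_neg (by omega), dif_pos rfl, dif_neg (by omega), dif_neg (by omega),
            dif_neg hje]
        rw [hM]
    rw [Finset.sum_congr rfl (fun j _ => hpt j), Finset.sum_add_distrib,
      Finset.sum_add_distrib, Finset.sum_ite_eq' Finset.univ, Finset.sum_ite_eq' Finset.univ]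
    simp only [Finset.mem_univ, if_true]
    have hS : P.i * (∑ j, (∑ i, P.sigma (u i) * GM P φ m i j) * w j)
        = ∑ j, (P.i * ∑ i, P.sigma (u i) * GM P φ m i j) * w j := by
      rw [Finset.mul_sum]
      exact Finset.sum_congr rfl (fun j _ => by ring)
    linear_combination hS + (a * w (⟨n, by omega⟩ : Fin (n + 2*m))) * P.i_mul_bar_one
      - (u (⟨n + 1, by omega⟩ : Fin (n + 2*m)) * w (⟨n, by omega⟩ : Fin (n + 2*m)))
        * P.bar_one_mul_i
  · -- other rows
    have he0 : eneg1vec R n m l = 0 := by simp [eneg1vec, hl1]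
    rw [he0, mul_zero, add_zero]
    by_cases hl0 : (l : ℕ) = n
    · have hl : l = ⟨n, hx0⟩ := Fin.ext hl0
      subst hl
      have hpt : ∀ j : Fin (n + 2*m),
          Mneg1 P φ m u a ⟨n, by omega⟩ j * w j
          = (if j = (⟨n, by omega⟩ : Fin (n + 2*m)) then w j else 0) := by
        intro j
        by_cases hjn : (j : ℕ) = n
        · have hj : j = ⟨n, hx0⟩ := Fin.ext hjn
          subst hj
          have hM : Mneg1 P φ m u a ⟨n, by omega⟩ ⟨n, by omega⟩ = 1 := by
            unfold Mneg1
            rw [dif_pos rfl, dif_neg (by omega), dif_pos rfl]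
          rw [hM, if_pos rfl, one_mul]
        · have hjne : j ≠ (⟨n, by omega⟩ : Fin (n + 2*m)) := by
            intro h
            have : (j : ℕ) = n := by rw [h]
            omega
          have hM : Mneg1 P φ m u a ⟨n, by omega⟩ j = 0 := by
            unfold Mneg1
            rw [dif_neg (by omega), dif_neg (by omega), if_neg (by omega)]
          rw [hM, if_neg hjne, zero_mul]
      rw [Finset.sum_congr rfl (fun j _ => hpt j), Finset.sum_ite_eq' Finset.univ]
      simp only [Finset.mem_univ, if_true]
      rw [hu]
      ring
    · have hpt : ∀ j : Fin (n + 2*m),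
          Mneg1 P φ m u a l j * w j
          = (if j = (⟨n, by omega⟩ : Fin (n + 2*m)) then -u l * w j else 0)
            + (if j = l then w j else 0) := by
        intro j
        by_cases hjn : (j : ℕ) = n
        · have hj : j = ⟨n, hx0⟩ := Fin.ext hjn
          subst hj
          have hM : Mneg1 P φ m u a l ⟨n, by omega⟩ = -u l := by
            unfold Mneg1
            by_cases hln : (l : ℕ) < n
            · rw [dif_pos rfl, dif_pos hln]
            · rw [dif_pos rfl, dif_neg hln, dif_neg (by omega), dif_neg (by omega)]
          have hlne : (⟨n, by omega⟩ : Fin (n + 2*m)) ≠ l := by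
            intro h
            have : n = (l : ℕ) := by rw [← h]
            omega
          rw [hM, if_pos rfl, if_neg hlne, add_zero]
        · have hjne : j ≠ (⟨n, by omega⟩ : Fin (n + 2*m)) := by
            intro h
            have : (j : ℕ) = n := by rw [h]
            omega
          rw [if_neg hjne, zero_add]
          by_cases hlj : (l : ℕ) = (j : ℕ)
          · have hjl : j = l := (Fin.ext hlj).symm
            have hM : Mneg1 P φ m u a l j = 1 := by
              unfold Mneg1
              rw [dif_neg (by omega), dif_neg (by omega), if_pos hlj]
            rw [hM, if_pos hjl, one_mul]
          · have hjl : j ≠ l := fun h => hlj (by rw [h])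
            have hM : Mneg1 P φ m u a l j = 0 := by
              unfold Mneg1
              rw [dif_neg (by omega), dif_neg (by omega), if_neg hlj]
            rw [hM, if_neg hjl, zero_mul]
      rw [Finset.sum_congr rfl (fun j _ => hpt j), Finset.sum_add_distrib,
        Finset.sum_ite_eq' Finset.univ, Finset.sum_ite_eq' Finset.univ]
      simp only [Finset.mem_univ, if_true]
      linear_combination (-(u l * w (⟨n, by omega⟩ : Fin (n + 2*m)))) * P.bar_one_mul_i

end OddUnitary
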